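/- (Theorem 3) Let G be a commutative group, q a prime, g, h : G with g^q = h^q = 1 and g not in the submonoid of powers of h. For rounds k = 1, …, l let O_k, K_k, r_k : ZMod q with commitments c_k = g^{K_k} * h^{r_k}, and set M_k = O_k - K_k (the message encoded in round k). Suppose there exists a witness α : ZMod q such that for every k with 2 ≤ k ≤ l, either c₁ * ∏_{j=2}^{k} c_j⁻¹ = g^{O₁ - ∑_{j=2}^{k} O_j} * h^{α} or c_k = g^{O_k} * h^{α}. Then at most one index k ∈ {2, …, l} has M_k ≠ 0, and for any such k one has M_k = M₁; i.e. at most one of the ciphertexts O₂, …, O_l encodes the same message as O₁ while all the others encode no message. -/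

import Mathlib

section Aux

variable {G : Type*} [CommGroup G] (q : ℕ) [Fact (Nat.Prime q)] (g : G)

private lemma dc_pow_val_congr (hg : g ^ q = 1) {m n : ℕ} (hmn : m ≡ n [MOD q]) :
    g ^ m = g ^ n :=
  (pow_eq_pow_iff_modEq).mpr (hmn.of_dvd (orderOf_dvd_of_pow_eq_one hg))

private lemma dc_pow_val_add (hg : g ^ q = 1) (x y : ZMod q) :
    g ^ (x + y).val = g ^ x.val * g ^ y.val := by
  haveI : NeZero q := ⟨(Fact.out : q.Prime).ne_zero⟩
  rw [← pow_add]
  apply dc_pow_val_congr q g hg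
  rw [ZMod.val_add]
  exact Nat.mod_modEq _ _

private lemma dc_pow_val_sub (hg : g ^ q = 1) (x y : ZMod q) :
    g ^ (x - y).val * g ^ y.val = g ^ x.val := by
  rw [← dc_pow_val_add q g hg, sub_add_cancel]

private lemma dc_pow_val_sub' (hg : g ^ q = 1) (x y : ZMod q) :
    g ^ (x - y).val = g ^ x.val * (g ^ y.val)⁻¹ :=
  eq_mul_inv_of_mul_eq (dc_pow_val_sub q g hg x y)

private lemma dc_pow_val_sum (hg : g ^ q = 1) (s : Finset ℕ) (f : ℕ → ZMod q) :
    g ^ (∑ j ∈ s, f j).val = ∏ j ∈ s, g ^ (f j).val := by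
  classical
  induction s using Finset.induction with
  | empty => simp [ZMod.val_zero]
  | insert _ _ hx ih =>
      rw [Finset.sum_insert hx, Finset.prod_insert hx, dc_pow_val_add q g hg, ih]

/-- Key: the `g`-exponent in a Pedersen commitment is uniquely determined. -/
private lemma dc_exp_inj (h : G) (hg : g ^ q = 1) (hh : h ^ q = 1)
    (hgh : g ∉ Submonoid.powers h) (a b a' b' : ZMod q)
    (heq : g ^ a.val * h ^ b.val = g ^ a'.val * h ^ b'.val) : a = a' := by
  haveI : NeZero q := ⟨(Fact.out : q.Prime).ne_zero⟩
  haveI : Fact (1 < q) := ⟨(Fact.out : q.Prime).one_lt⟩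
  by_contra hne
  have hd : a - a' ≠ 0 := sub_ne_zero.mpr hne
  have h1 : g ^ (a - a').val * h ^ b.val = h ^ b'.val := by
    have step : (g ^ (a - a').val * h ^ b.val) * g ^ a'.val
        = h ^ b'.val * g ^ a'.val := by
      rw [mul_right_comm, dc_pow_val_sub q g hg, heq, mul_comm]
    exact mul_right_cancel step
  have h2 : g ^ (a - a').val = h ^ (b' - b).val := by
    have step : g ^ (a - a').val * h ^ b.val = h ^ (b' - b).val * h ^ b.val := by
      rw [h1, dc_pow_val_sub q h hh]
    exact mul_right_cancel step
  have hde : (a - a') * (a - a')⁻¹ = 1 := mul_inv_cancel₀ hd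
  have hgpow : g = (g ^ (a - a').val) ^ ((a - a')⁻¹).val := by
    rw [← pow_mul]
    have hmod : (a - a').val * ((a - a')⁻¹).val ≡ (1 : ZMod q).val [MOD q] := by
      rw [← hde, ZMod.val_mul]
      exact (Nat.mod_modEq _ _).symm
    rw [dc_pow_val_congr q g hg hmod, ZMod.val_one, pow_one]
  refine hgh ⟨(b' - b).val * ((a - a')⁻¹).val, ?_⟩
  show h ^ ((b' - b).val * ((a - a')⁻¹).val) = g
  rw [pow_mul, ← h2, ← hgpow]

end Aux

/-- Theorem 3: given rounds `1, …, l` with ciphertexts `O k`, keys `K k`,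
commitments `c k = g^{K k} h^{r k}` and encoded messages `M k = O k - K k`,
if there is a witness `α` such that for every `2 ≤ k ≤ l` either
`c 1 * ∏_{j=2}^{k} (c j)⁻¹ = g^{O 1 - ∑_{j=2}^{k} O j} h^{α}` or
`c k = g^{O k} h^{α}`, then at most one `k ∈ {2, …, l}` has `M k ≠ 0`,
and any such `k` satisfies `M k = M 1`. -/
theorem dc_at_most_one_retransmission {G : Type*} [CommGroup G] (q : ℕ)
    [Fact (Nat.Prime q)] (g h : G) (hg : g ^ q = 1) (hh : h ^ q = 1)
    (hgh : g ∉ Submonoid.powers h)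
    (l : ℕ) (O K r : ℕ → ZMod q)
    (c : ℕ → G) (hc : ∀ k, c k = g ^ (K k).val * h ^ (r k).val)
    (M : ℕ → ZMod q) (hM : ∀ k, M k = O k - K k)
    (α : ZMod q)
    (hwit : ∀ k, 2 ≤ k → k ≤ l →
      (c 1 * ∏ j ∈ Finset.Icc 2 k, (c j)⁻¹ =
          g ^ (O 1 - ∑ j ∈ Finset.Icc 2 k, O j).val * h ^ α.val) ∨
        c k = g ^ (O k).val * h ^ α.val) :
    (∀ k k', 2 ≤ k → k ≤ l → 2 ≤ k' → k' ≤ l →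
        M k ≠ 0 → M k' ≠ 0 → k = k') ∧
    (∀ k, 2 ≤ k → k ≤ l → M k ≠ 0 → M k = M 1) := by
  classical
  -- the left-hand side of alternative A, computed in terms of keys
  have hprod : ∀ k, c 1 * ∏ j ∈ Finset.Icc 2 k, (c j)⁻¹
      = g ^ (K 1 - ∑ j ∈ Finset.Icc 2 k, K j).val
        * h ^ (r 1 - ∑ j ∈ Finset.Icc 2 k, r j).val := by
    intro k
    simp only [hc]
    rw [dc_pow_val_sub' q g hg, dc_pow_val_sub' q h hh,
      dc_pow_val_sum q g hg, dc_pow_val_sum q h hh,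
      Finset.prod_inv_distrib, Finset.prod_mul_distrib,
      mul_inv, mul_mul_mul_comm]
  -- If M k ≠ 0 then alternative A holds, giving M 1 = ∑_{j=2}^k M j
  have hA : ∀ k, 2 ≤ k → k ≤ l → M k ≠ 0 →
      M 1 = ∑ j ∈ Finset.Icc 2 k, M j := by
    intro k hk2 hkl hMk
    rcases hwit k hk2 hkl with hA' | hB'
    · rw [hprod k] at hA'
      have hKO := dc_exp_inj q g h hg hh hgh _ _ _ _ hA'
      have : ∑ j ∈ Finset.Icc 2 k, M j
          = ∑ j ∈ Finset.Icc 2 k, (O j - K j) := by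
        apply Finset.sum_congr rfl; intro j _; rw [hM]
      rw [this, Finset.sum_sub_distrib, hM]
      linear_combination -hKO
    · exfalso
      rw [hc k] at hB'
      have := dc_exp_inj q g h hg hh hgh _ _ _ _ hB'
      exact hMk (by rw [hM, this, sub_self])
  -- no two distinct nonzero-message rounds
  have key : ∀ k' k, 2 ≤ k → k < k' → k' ≤ l → M k ≠ 0 → M k' ≠ 0 → False := by
    intro k'
    induction k' using Nat.strong_induction_on with
    | _ k' ih =>
      intro k hk2 hkk' hk'l hMk hMk'
      by_cases hmid : ∃ j, k < j ∧ j < k' ∧ M j ≠ 0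
      · obtain ⟨j, hj1, hj2, hj3⟩ := hmid
        exact ih j hj2 k hk2 hj1 (le_of_lt (lt_of_lt_of_le hj2 hk'l)) hMk hj3
      · push_neg at hmid
        have e1 := hA k hk2 (by omega) hMk
        have e2 := hA k' (by omega) hk'l hMk'
        have hsplit : ∑ j ∈ Finset.Ioc 1 k, M j + ∑ j ∈ Finset.Ioc k k', M j
            = ∑ j ∈ Finset.Ioc 1 k', M j :=
          Finset.sum_Ioc_consecutive _ (by omega) (le_of_lt hkk')
        have htail : ∑ j ∈ Finset.Ioc k k', M j = M k' := by
          apply Finset.sum_eq_single_of_mem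
          · simp [Finset.mem_Ioc]; omega
          · intro j hj hjne
            simp only [Finset.mem_Ioc] at hj
            exact hmid j hj.1 (lt_of_le_of_ne hj.2 hjne)
        rw [show Finset.Icc 2 k = Finset.Ioc 1 k from Finset.Icc_add_one_left_eq_Ioc 1 k] at e1
        rw [show Finset.Icc 2 k' = Finset.Ioc 1 k' from Finset.Icc_add_one_left_eq_Ioc 1 k'] at e2
        have : M k' = 0 := by linear_combination e1 - e2 + hsplit - htail
        exact hMk' this
  constructor
  · intro k k' hk2 hkl hk'2 hk'l hMk hMk'
    rcases lt_trichotomy k k' with hlt | heq | hgt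
    · exact absurd (key k' k hk2 hlt hk'l hMk hMk') (fun x => x)
    · exact heq
    · exact absurd (key k k' hk'2 hgt hkl hMk' hMk) (fun x => x)
  · intro k hk2 hkl hMk
    have e1 := hA k hk2 hkl hMk
    have : ∑ j ∈ Finset.Icc 2 k, M j = M k := by
      apply Finset.sum_eq_single_of_mem
      · simp [Finset.mem_Icc]; omega
      · intro j hj hjne
        simp only [Finset.mem_Icc] at hj
        by_contra hMj
        exact key k j hj.1 (lt_of_le_of_ne hj.2 hjne) hkl hMj hMk
    rw [this] at e1
    exact e1.symm
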